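/- Let Λ be the free ℤ-module with basis E_1, …, E_N and bilinear form E_a · E_b = −δ_{ab}. For i ∈ {1,…,n} let J_i ⊆ {i+1,…,n} and e_i = E_i − Σ_{j ∈ J_i} E_j, and assume e_a · e_b ≥ 0 for all a ≠ b. Consider the undirected graph G on vertex set {1,…,n} with an edge between i and j iff j ∈ J_i or i ∈ J_j. Then G is chordal: every cycle in G of length at least 4 has a chord; equivalently, every minimal cycle of G is a triangle. -/

import Mathlib

/-- The basis vector `E i` of the free ℤ-module on `Fin n`. -/
def Ebasis (n : ℕ) (i : Fin n) : Fin n → ℤ := Pi.single i 1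

/-- The symmetric bilinear form determined by `E a · E b = -δ_{ab}`. -/
def Bform {n : ℕ} (x y : Fin n → ℤ) : ℤ := -(∑ c, x c * y c)

/-- The type I exceptional class `e i = E i - ∑_{j ∈ J i} E j`. -/
def eclass {n : ℕ} (J : Fin n → Finset (Fin n)) (i : Fin n) : Fin n → ℤ :=
  Ebasis n i - ∑ j ∈ J i, Ebasis n j

/-- The undirected graph with an edge between `i` and `j` iff `j ∈ J i` or `i ∈ J j`. -/
def descGraph {n : ℕ} (J : Fin n → Finset (Fin n)) : SimpleGraph (Fin n) :=
  SimpleGraph.fromRel (fun i j => j ∈ J i)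

open SimpleGraph

lemma supp_get {V : Type*} {G : SimpleGraph V} :
    ∀ {u v : V} (p : G.Walk u v) (i : ℕ) (h : i < p.support.length),
      p.support[i] = p.getVert i := by
  intro u v p
  induction p with
  | nil =>
    intro i h
    simp only [Walk.support_nil, List.length_singleton] at h
    interval_cases i
    simp [Walk.getVert]
  | cons hadj q ih =>
    intro i h
    cases i with
    | zero => simp [Walk.getVert]
    | succ i =>
      simp only [Walk.support_cons, List.getElem_cons_succ, Walk.getVert_cons_succ]
      exact ih i (by simp only [Walk.support_cons, List.length_cons] at h; omega)

lemma cyc_inj {V : Type*} {G : SimpleGraph V} {m : V} {c : G.Walk m m} (hc : c.IsCycle)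
    {i j : ℕ} (hi1 : 1 ≤ i) (hi2 : i ≤ c.length) (hj1 : 1 ≤ j) (hj2 : j ≤ c.length)
    (h : c.getVert i = c.getVert j) : i = j := by
  have hnd := hc.support_nodup
  have hlen : c.support.tail.length = c.length := by
    have := c.length_support
    cases hs : c.support with
    | nil => simp [hs] at this
    | cons x l => simp [hs] at this ⊢; omega
  have h1 : c.support.tail[i-1]'(by omega) = c.getVert i := by
    rw [List.getElem_tail, supp_get]
    congr 1
    omega
  have h2 : c.support.tail[j-1]'(by omega) = c.getVert j := by
    rw [List.getElem_tail, supp_get]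
    congr 1
    omega
  rw [← h1, ← h2, hnd.getElem_inj_iff] at h
  omega

lemma edge_index {V : Type*} {G : SimpleGraph V} {x y : V} :
    ∀ {u v : V} (p : G.Walk u v), s(x,y) ∈ p.edges →
      ∃ i < p.length, (p.getVert i = x ∧ p.getVert (i+1) = y) ∨
        (p.getVert i = y ∧ p.getVert (i+1) = x) := by
  intro u v p
  induction p with
  | nil => simp
  | cons hadj q ih =>
    intro h
    rw [Walk.edges_cons, List.mem_cons] at h
    rcases h with h | h
    · refine ⟨0, by simp, ?_⟩
      rcases Sym2.eq_iff.mp h with ⟨hx, hy⟩ | ⟨hy, hx⟩ <;> subst hx <;> subst hy <;>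
        simp [Walk.getVert_cons_succ, Walk.getVert_zero]
    · obtain ⟨i, hi, hor⟩ := ih h
      exact ⟨i+1, by simp only [Walk.length_cons]; omega,
        by simpa [Walk.getVert_cons_succ] using hor⟩

lemma eclass_apply {n : ℕ} (J : Fin n → Finset (Fin n)) (i c : Fin n) :
    eclass J i c = (if c = i then 1 else 0) - (if c ∈ J i then 1 else 0) := by
  simp [eclass, Ebasis, Finset.sum_apply, Pi.single_apply, Finset.sum_ite_eq]

lemma key_adj {n : ℕ} (J : Fin n → Finset (Fin n)) (hdesc : ∀ i, ∀ j ∈ J i, i < j)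
    (hpos : ∀ a b, a ≠ b → 0 ≤ Bform (eclass J a) (eclass J b))
    {a b m : Fin n} (hab : a ≠ b) (hma : m ∈ J a) (hmb : m ∈ J b) :
    b ∈ J a ∨ a ∈ J b := by
  by_contra hcon
  push_neg at hcon
  obtain ⟨hba, hab'⟩ := hcon
  have haa : a ∉ J a := fun h => absurd (hdesc a a h) (lt_irrefl a)
  have hbb : b ∉ J b := fun h => absurd (hdesc b b h) (lt_irrefl b)
  have hprod : ∀ c, eclass J a c * eclass J b c = if c ∈ J a ∧ c ∈ J b then 1 else 0 := by
    intro c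
    rw [eclass_apply, eclass_apply]
    by_cases h1 : c ∈ J a <;> by_cases h2 : c ∈ J b <;>
      by_cases h3 : c = a <;> by_cases h4 : c = b <;> simp_all
  have hsum : (1 : ℤ) ≤ ∑ c, eclass J a c * eclass J b c := by
    have := Finset.single_le_sum (f := fun c => eclass J a c * eclass J b c)
      (fun c _ => by show (0:ℤ) ≤ eclass J a c * eclass J b c; rw [hprod]; positivity)
      (Finset.mem_univ m)
    simp only [hprod, if_pos (And.intro hma hmb)] at this
    calc (1:ℤ) ≤ ∑ x : Fin n, if x ∈ J a ∧ x ∈ J b then 1 else 0 := this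
    _ = ∑ c, eclass J a c * eclass J b c := by simp only [hprod]
  have := hpos a b hab
  rw [Bform] at this
  omega

/-- If `J_i ⊆ {i+1,…,n}` and all pairwise intersections `e_a · e_b` (`a ≠ b`) are
nonnegative, then the associated undirected graph is chordal: every cycle of
length at least `4` has a chord. -/
theorem stmt5 {n : ℕ} (J : Fin n → Finset (Fin n)) (hdesc : ∀ i, ∀ j ∈ J i, i < j)
    (hpos : ∀ a b, a ≠ b → 0 ≤ Bform (eclass J a) (eclass J b)) :
    ∀ (v : Fin n) (c : (descGraph J).Walk v v), c.IsCycle → 4 ≤ c.length →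
      ∃ u w, (descGraph J).Adj u w ∧ u ∈ c.support ∧ w ∈ c.support ∧ s(u, w) ∉ c.edges := by
  intro v c hc hlen4
  classical
  -- maximal vertex of the cycle
  set m : Fin n := c.support.toFinset.max' ⟨v, by simp⟩ with hm_def
  have hm : m ∈ c.support := by
    have := c.support.toFinset.max'_mem ⟨v, by simp⟩
    simpa using this
  have hmax : ∀ x ∈ c.support, x ≤ m := fun x hx =>
    c.support.toFinset.le_max' x (List.mem_toFinset.mpr hx)
  set c' := c.rotate m hm with hc'_def
  have hc' : c'.IsCycle := hc.rotate hm
  have hlen' : c'.length = c.length := by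
    have h1 := (c.rotate_edges m hm).perm.length_eq
    rwa [Walk.length_edges, Walk.length_edges] at h1
  have hk : 4 ≤ c'.length := hlen' ▸ hlen4
  set k := c'.length with hk_def
  set a := c'.getVert 1 with ha_def
  set b := c'.getVert (k-1) with hb_def
  -- adjacency of m with a and b
  have hadj_ma : (descGraph J).Adj m a := by
    have := c'.adj_getVert_succ (i := 0) (by omega)
    simpa [Walk.getVert_zero] using this
  have hadj_bm : (descGraph J).Adj b m := by
    have h := c'.adj_getVert_succ (i := k-1) (by omega)
    have hkk : k - 1 + 1 = k := by omega
    rw [hkk, hk_def, Walk.getVert_length] at h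
    exact h
  have ham : a ≠ m := hadj_ma.ne.symm
  have hbm : b ≠ m := hadj_bm.ne
  -- a, b belong to the original support
  have hmem : ∀ x : Fin n, x ∈ c'.support → x ≠ m → x ∈ c.support := by
    intro x hx hxm
    have hx' : x ∈ c'.support.tail := by
      rcases (Walk.mem_support_iff c').mp hx with h | h
      · exact absurd h hxm
      · exact h
    have := (Walk.support_rotate c m hm).mem_iff.mp hx'
    exact List.mem_of_mem_tail this
  have haS : a ∈ c.support :=
    hmem a (Walk.mem_support_iff_exists_getVert.mpr ⟨1, ha_def.symm, by omega⟩) ham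
  have hbS : b ∈ c.support :=
    hmem b (Walk.mem_support_iff_exists_getVert.mpr ⟨k-1, hb_def.symm, by omega⟩) hbm
  have halt : a < m := lt_of_le_of_ne (hmax a haS) ham
  have hblt : b < m := lt_of_le_of_ne (hmax b hbS) hbm
  -- extract m ∈ J a and m ∈ J b
  have hma' : m ∈ J a := by
    rcases (SimpleGraph.fromRel_adj _ _ _).mp hadj_ma with ⟨_, h | h⟩
    · exact absurd (hdesc m a h) (by omega)
    · exact h
  have hmb' : m ∈ J b := by
    rcases (SimpleGraph.fromRel_adj _ _ _).mp hadj_bm with ⟨_, h | h⟩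
    · exact h
    · exact absurd (hdesc m b h) (by omega)
  -- a ≠ b
  have hab : a ≠ b := by
    intro h
    have := cyc_inj hc' (i := 1) (j := k-1) (by omega) (by omega) (by omega) (by omega) h
    omega
  -- chord adjacency
  have hadj_ab : (descGraph J).Adj a b :=
    (SimpleGraph.fromRel_adj _ _ _).mpr ⟨hab, key_adj J hdesc hpos hab hma' hmb'⟩
  refine ⟨a, b, hadj_ab, haS, hbS, ?_⟩
  intro hE
  have hE' : s(a, b) ∈ c'.edges := (c.rotate_edges m hm).mem_iff.mpr hE
  obtain ⟨i, hi, hor⟩ := edge_index c' hE'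
  rcases hor with ⟨hx, hy⟩ | ⟨hx, hy⟩
  · -- getVert i = a, getVert (i+1) = b
    have hi1 : 1 ≤ i := by
      rcases Nat.eq_zero_or_pos i with h0 | h0
      · rw [h0, Walk.getVert_zero] at hx; exact absurd hx.symm ham
      · exact h0
    have : i = 1 := cyc_inj hc' hi1 (by omega) (by omega) (by omega) (hx.trans ha_def.symm ▸ hx)
    subst this
    have h2 : (2 : ℕ) = k - 1 :=
      cyc_inj hc' (by omega) (by omega) (by omega) (by omega) (hy.trans hb_def)
    omega
  · -- getVert i = b, getVert (i+1) = a
    have hi1 : 1 ≤ i := by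
      rcases Nat.eq_zero_or_pos i with h0 | h0
      · rw [h0, Walk.getVert_zero] at hx; exact absurd hx.symm hbm
      · exact h0
    have hik : i = k - 1 :=
      cyc_inj hc' hi1 (by omega) (by omega) (by omega) (hx.trans hb_def)
    have : c'.getVert (i+1) = m := by
      rw [hik]
      have : k - 1 + 1 = k := by omega
      rw [this]
      exact Walk.getVert_length c'
    rw [hy] at this
    exact ham this
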